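/- arXiv:1201.0986 — 3 statements merged into one kernel-verified Lean document; each statement's English description precedes it below -/
import Mathlib

section
/- Let (X,d) be a complete bounded metric space and L : X → X a k-Lipschitz mapping. Suppose there exist constants 0 < γ < 1 and c > 0 such that d(L^{n+1}x, L^n x) ≤ c·γ^n for every x ∈ X and every n ∈ ℕ. Then for each x ∈ X the sequence (L^n x) converges, and the mapping R defined by Rx = lim_{n→∞} L^n x is Hölder continuous: there exist constants K > 0 and 0 < α < 1 such that d(Rx, Ry) ≤ K·d(x,y)^α for all x, y ∈ X. -/
open Filter Topology NNReal

lemma stmt0_aux {a b g l : ℝ} (hg : g ≠ 0) (h : a * (b - g) = -g) :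
    a * l / g * b + l = a * l := by
  field_simp
  linear_combination l * h

/-- Let `(X,d)` be a complete bounded metric space and `L : X → X`
a `k`-Lipschitz mapping such that `d(L^[n+1] x, L^[n] x) ≤ c * γ ^ n` for all `x` and `n`,
with `0 < γ < 1` and `c > 0`.  Then for each `x` the sequence of iterates `L^[n] x`
converges, and the limit map `R` is Hölder continuous. -/
theorem stmt0 {X : Type*} [MetricSpace X] [CompleteSpace X]
    (hbd : Bornology.IsBounded (Set.univ : Set X))
    (L : X → X) (k : ℝ≥0) (hL : LipschitzWith k L)
    (γ c : ℝ) (hγ0 : 0 < γ) (hγ1 : γ < 1) (hc : 0 < c)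
    (hiter : ∀ (x : X) (n : ℕ), dist (L^[n + 1] x) (L^[n] x) ≤ c * γ ^ n) :
    ∃ R : X → X,
      (∀ x : X, Tendsto (fun n => L^[n] x) atTop (nhds (R x))) ∧
      ∃ K α : ℝ, 0 < K ∧ 0 < α ∧ α < 1 ∧
        ∀ x y : X, dist (R x) (R y) ≤ K * dist x y ^ α := by
  have hdd : ∀ x : X, ∀ n, dist ((fun n => L^[n] x) n) ((fun n => L^[n] x) (n+1)) ≤ c * γ ^ n := by
    intro x n; simpa [dist_comm] using hiter x n
  have hcauchy : ∀ x : X, CauchySeq (fun n => L^[n] x) :=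
    fun x => cauchySeq_of_le_geometric γ c hγ1 (hdd x)
  choose R hR using fun x => cauchySeq_tendsto_of_complete (hcauchy x)
  refine ⟨R, hR, ?_⟩
  -- constants
  obtain ⟨D, hD⟩ := Metric.isBounded_iff.mp hbd
  set D' : ℝ := max D 1 with hD'def
  have hD'1 : (1:ℝ) ≤ D' := le_max_right _ _
  have hD'0 : (0:ℝ) < D' := lt_of_lt_of_le one_pos hD'1
  have hDbd : ∀ x y : X, dist x y ≤ D' := fun x y =>
    (hD (Set.mem_univ x) (Set.mem_univ y)).trans (le_max_left _ _)
  set k' : ℝ := max (k:ℝ) 2 with hk'def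
  have hk'2 : (2:ℝ) ≤ k' := le_max_right _ _
  have hk'1 : (1:ℝ) < k' := lt_of_lt_of_le one_lt_two hk'2
  have hk'0 : (0:ℝ) < k' := lt_trans one_pos hk'1
  have h1γ : (0:ℝ) < 1 - γ := by linarith
  set B : ℝ := c / (1 - γ) with hBdef
  have hB : 0 < B := div_pos hc h1γ
  have hlg : Real.log γ < 0 := Real.log_neg hγ0 hγ1
  have hlk : 0 < Real.log k' := Real.log_pos hk'1
  have hden : 0 < Real.log k' - Real.log γ := by linarith
  set α : ℝ := (-Real.log γ) / (Real.log k' - Real.log γ) with hαdef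
  have hα0 : 0 < α := div_pos (by linarith) hden
  have hα1 : α < 1 := by
    rw [hαdef, div_lt_one hden]; linarith
  -- key inequality
  have hdistR : ∀ (x : X) (n : ℕ), dist (L^[n] x) (R x) ≤ B * γ ^ n :=
    fun x n => by
      have := dist_le_of_le_geometric_of_tendsto γ c hγ1 (hdd x) (hR x) n
      rw [hBdef]; calc dist (L^[n] x) (R x) ≤ c * γ ^ n / (1-γ) := this
        _ = c / (1-γ) * γ ^ n := by ring
  have hLip : ∀ (x y : X) (n : ℕ), dist (L^[n] x) (L^[n] y) ≤ k' ^ n * dist x y := by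
    intro x y n
    have h1 := (hL.iterate n).dist_le_mul x y
    have h2 : ((k ^ n : ℝ≥0) : ℝ) ≤ k' ^ n := by
      push_cast
      exact pow_le_pow_left₀ (by positivity) (le_max_left _ _) n
    exact h1.trans (mul_le_mul_of_nonneg_right h2 dist_nonneg)
  have key : ∀ (x y : X) (n : ℕ),
      dist (R x) (R y) ≤ 2 * B * γ ^ n + k' ^ n * dist x y := by
    intro x y n
    calc dist (R x) (R y) ≤ dist (R x) (L^[n] x) + dist (L^[n] x) (L^[n] y)
          + dist (L^[n] y) (R y) := dist_triangle4 _ _ _ _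
      _ ≤ B * γ ^ n + k' ^ n * dist x y + B * γ ^ n := by
          gcongr
          · rw [dist_comm]; exact hdistR x n
          · exact hLip x y n
          · exact hdistR y n
      _ = 2 * B * γ ^ n + k' ^ n * dist x y := by ring
  refine ⟨D' + 2 * B + k', α, by positivity, hα0, hα1, ?_⟩
  intro x y
  rcases eq_or_lt_of_le (dist_nonneg : 0 ≤ dist x y) with hd0 | hd0
  · -- dist = 0
    have h0 : dist (R x) (R y) ≤ 0 := by
      have htend : Tendsto (fun n : ℕ => 2 * B * γ ^ n) atTop (𝓝 0) := by
        simpa using (tendsto_pow_atTop_nhds_zero_of_lt_one hγ0.le hγ1).const_mul (2*B)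
      refine le_of_tendsto_of_tendsto tendsto_const_nhds htend (Eventually.of_forall ?_)
      intro n
      have := key x y n
      rw [← hd0] at this
      simpa using this
    rw [← hd0, Real.zero_rpow hα0.ne', mul_zero]
    exact h0
  by_cases hd1 : 1 ≤ dist x y
  · -- dist ≥ 1
    have h1 : (1:ℝ) ≤ dist x y ^ α := Real.one_le_rpow hd1 hα0.le
    have : dist (R x) (R y) ≤ D' := hDbd _ _
    have h2 : D' ≤ D' * dist x y ^ α := by nlinarith
    nlinarith [Real.rpow_nonneg dist_nonneg α (x := dist x y), hB.le, hk'0.le]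
  · push_neg at hd1
    set d : ℝ := dist x y with hddef
    have hld : Real.log d < 0 := Real.log_neg hd0 hd1
    set t : ℝ := α * Real.log d / Real.log γ with htdef
    have ht0 : 0 ≤ t := by
      apply le_of_lt
      exact div_pos_of_neg_of_neg (by nlinarith) hlg
    set n : ℕ := ⌈t⌉₊ with hndef
    have htn : t ≤ (n:ℝ) := Nat.le_ceil t
    have hnt : (n:ℝ) ≤ t + 1 := (Nat.ceil_lt_add_one ht0).le
    have hedα : d ^ α = Real.exp (α * Real.log d) := by
      rw [Real.rpow_def_of_pos hd0]; ring_nf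
    have hαeq : α * (Real.log k' - Real.log γ) = -Real.log γ := by
      rw [hαdef]; field_simp
    have h1 : γ ^ n ≤ d ^ α := by
      have : γ ^ (n:ℝ) ≤ γ ^ t :=
        Real.rpow_le_rpow_of_exponent_ge hγ0 hγ1.le htn
      rw [Real.rpow_natCast] at this
      refine this.trans (le_of_eq ?_)
      rw [Real.rpow_def_of_pos hγ0, hedα]
      congr 1
      rw [htdef, mul_comm, div_mul_cancel₀ _ hlg.ne]
    have h2 : k' ^ n * d ≤ k' * d ^ α := by
      have hkn : k' ^ (n:ℝ) ≤ k' ^ (t + 1) :=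
        Real.rpow_le_rpow_of_exponent_le hk'1.le hnt
      rw [Real.rpow_natCast] at hkn
      have hkt : k' ^ (t+1) = k' * Real.exp (t * Real.log k') := by
        rw [Real.rpow_add hk'0, Real.rpow_one, Real.rpow_def_of_pos hk'0]
        ring_nf
      have hexp : Real.exp (t * Real.log k') * d = d ^ α := by
        rw [hedα, ← Real.exp_log hd0, ← Real.exp_add]
        congr 1
        rw [htdef, Real.log_exp]
        exact stmt0_aux hlg.ne hαeq
      calc k' ^ n * d ≤ k' ^ (t+1) * d := by
              apply mul_le_mul_of_nonneg_right hkn hd0.le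
        _ = k' * (Real.exp (t * Real.log k') * d) := by rw [hkt]; ring
        _ = k' * d ^ α := by rw [hexp]
    calc dist (R x) (R y) ≤ 2 * B * γ ^ n + k' ^ n * d := key x y n
      _ ≤ 2 * B * (d ^ α) + k' * d ^ α := by
          gcongr
      _ ≤ (D' + 2 * B + k') * d ^ α := by
          have : 0 ≤ d ^ α := Real.rpow_nonneg hd0.le α
          nlinarith
end

section
/- Let (x_α)_{α∈A} be a bounded net in a Banach space X which converges to 0 weakly but not in norm. Then there exists an increasing sequence (α_n) of indices in A such that: lim_n ‖x_{α_n}‖ = limsup_α ‖x_α‖, the asymptotic diameter of the sequence (x_{α_n}) is at most D[(x_α)] := limsup_α limsup_β ‖x_α − x_β‖, and (x_{α_n}) is a basic sequence. -/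
open Filter Topology

/-- The asymptotic diameter of a sequence: `inf_n sup_{m,k ≥ n} ‖y_m − y_k‖`. -/
noncomputable def asympDiam {X : Type*} [NormedAddCommGroup X] (y : ℕ → X) : ℝ :=
  ⨅ n : ℕ, sSup {d : ℝ | ∃ m ≥ n, ∃ k ≥ n, d = ‖y m - y k‖}

/-- A sequence is basic: there is `c > 0` such that
`‖∑_{i<q} t_i y_i‖ ≤ c ‖∑_{i<p} t_i y_i‖` for all `q ≤ p` and scalars `t_i`. -/
def IsBasicSeq {X : Type*} [NormedAddCommGroup X] [NormedSpace ℝ X] (y : ℕ → X) : Prop :=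
  ∃ c : ℝ, 0 < c ∧ ∀ p q : ℕ, q ≤ p → ∀ t : ℕ → ℝ,
    ‖∑ i ∈ Finset.range q, t i • y i‖ ≤ c * ‖∑ i ∈ Finset.range p, t i • y i‖

section RecLemma
variable {ι : Type*} [Nonempty ι] (P : ℕ → (ℕ → ι) → ι → Prop)
  (hmono : ∀ n f g a, (∀ m < n, f m = g m) → P n f a → P n g a)
  (h : ∀ n f, (∀ m < n, P m f (f m)) → ∃ a, P n f a)

private noncomputable def recStep (n : ℕ) (fh : {f : ℕ → ι // ∀ m < n, P m f (f m)}) :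
    {f : ℕ → ι // ∀ m < n + 1, P m f (f m)} :=
  ⟨Function.update fh.1 n (Classical.choose (h n fh.1 fh.2)), by
    intro m hm
    have hagree : ∀ k < n, Function.update fh.1 n (Classical.choose (h n fh.1 fh.2)) k = fh.1 k :=
      fun k hk => Function.update_of_ne (Nat.ne_of_lt hk) _ _
    rcases Nat.lt_succ_iff_lt_or_eq.mp hm with hm' | rfl
    · rw [hagree m hm']
      exact hmono m fh.1 _ (fh.1 m) (fun k hk => (hagree k (hk.trans hm')).symm) (fh.2 m hm')
    · rw [Function.update_self]
      exact hmono m fh.1 _ _ (fun k hk => (hagree k hk).symm) (Classical.choose_spec (h m fh.1 fh.2))⟩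

private noncomputable def recAux : (n : ℕ) → {f : ℕ → ι // ∀ m < n, P m f (f m)}
  | 0 => ⟨fun _ => Classical.arbitrary ι, fun m hm => absurd hm (Nat.not_lt_zero m)⟩
  | (n+1) => recStep P hmono h n (recAux n)

include hmono h in
lemma exists_seq_of_step : ∃ α : ℕ → ι, ∀ n, P n α (α n) := by
  set G := recAux P hmono h with hG
  have hstep : ∀ n m, m < n → (G (n+1)).1 m = (G n).1 m := by
    intro n m hm
    show (recStep P hmono h n (G n)).1 m = _
    exact Function.update_of_ne (Nat.ne_of_lt hm) _ _
  have coh : ∀ n m, m < n → (G n).1 m = (G (m+1)).1 m := by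
    intro n
    induction n with
    | zero => exact fun m hm => absurd hm (Nat.not_lt_zero m)
    | succ n ih =>
        intro m hm
        rcases Nat.lt_succ_iff_lt_or_eq.mp hm with hm' | rfl
        · rw [hstep n m hm']; exact ih m hm'
        · rfl
  refine ⟨fun n => (G (n+1)).1 n, fun n => ?_⟩
  have := (G (n+1)).2 n (Nat.lt_succ_self n)
  exact hmono n (G (n+1)).1 _ _ (fun m hm => coh (n+1) m (hm.trans (Nat.lt_succ_self n))) this

end RecLemma

lemma mazur_key {X : Type*} [NormedAddCommGroup X] [NormedSpace ℝ X]
    (F : Submodule ℝ X) (hF : FiniteDimensional ℝ F) {ε L : ℝ} (hε : 0 < ε) (hL : 0 < L) :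
    ∃ (T : Set (X →L[ℝ] ℝ)) (η : ℝ), T.Finite ∧ 0 < η ∧
      ∀ v : X, L / 2 ≤ ‖v‖ → (∀ f ∈ T, |f v| ≤ η) →
        ∀ y ∈ F, ∀ t : ℝ, (1 - ε) * ‖y‖ ≤ ‖y + t • v‖ := by
  classical
  have : ProperSpace F := FiniteDimensional.proper ℝ F
  set S : Set X := (↑) '' (Metric.sphere (0 : F) 1) with hS
  have hScpt : IsCompact S := (isCompact_sphere (0 : F) 1).image continuous_subtype_val
  have hnorm1 : ∀ y ∈ S, ‖y‖ = 1 := by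
    rintro y ⟨z, hz, rfl⟩
    simpa using hz
  have hmemF : ∀ y ∈ S, y ∈ F := by rintro y ⟨z, _, rfl⟩; exact z.2
  have hcover : S ⊆ ⋃ y ∈ S, Metric.ball y (ε / 3) := by
    intro y hy
    exact Set.mem_biUnion hy (Metric.mem_ball_self (by linarith))
  obtain ⟨b, hbS, hbfin, hbcov⟩ :=
    hScpt.elim_finite_subcover_image (fun y _ => Metric.isOpen_ball) hcover
  have hdual : ∀ y ∈ b, ∃ g : X →L[ℝ] ℝ, ‖g‖ = 1 ∧ g y = ‖y‖ := by
    intro y hy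
    have : y ≠ 0 := by
      intro h0
      have := hnorm1 y (hbS hy); rw [h0] at this; simp at this
    exact exists_dual_vector ℝ y (norm_ne_zero_iff.mpr this)
  choose! g hg1 hg2 using hdual
  refine ⟨g '' b, ε * L / 12, hbfin.image g, by positivity, ?_⟩
  intro v hv hsmall y hyF t
  rcases eq_or_ne y 0 with rfl | hy0
  · simp only [norm_zero, mul_zero]; positivity
  have hynorm : 0 < ‖y‖ := norm_pos_iff.mpr hy0
  set u : X := ‖y‖⁻¹ • y with hu
  have hunorm : ‖u‖ = 1 := by
    rw [hu, norm_smul, norm_inv, norm_norm, inv_mul_cancel₀ (ne_of_gt hynorm)]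
  have huF : u ∈ F := F.smul_mem _ hyF
  set s : ℝ := ‖y‖⁻¹ * t with hs
  have hdecomp : y + t • v = ‖y‖ • (u + s • v) := by
    rw [hu, hs, smul_add, smul_smul, smul_smul, mul_inv_cancel₀ (ne_of_gt hynorm), one_smul,
      ← mul_assoc, mul_inv_cancel₀ (ne_of_gt hynorm), one_mul]
  have key : 1 - ε ≤ ‖u + s • v‖ := by
    rcases le_or_gt (4 / L) |s| with hbig | hsml
    · have h1 : |s| * ‖v‖ - 1 ≤ ‖u + s • v‖ := by
        have h2 : ‖s • v‖ ≤ ‖u + s • v‖ + ‖u‖ := by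
          calc ‖s • v‖ = ‖(u + s • v) - u‖ := by congr 1; abel
          _ ≤ ‖u + s • v‖ + ‖u‖ := norm_sub_le _ _
        have h3 : ‖s • v‖ = |s| * ‖v‖ := by rw [norm_smul, Real.norm_eq_abs]
        rw [hunorm] at h2; linarith
      have h2 : 2 ≤ |s| * ‖v‖ := by
        calc (2:ℝ) = (4 / L) * (L / 2) := by field_simp; norm_num
        _ ≤ |s| * ‖v‖ := by
            apply mul_le_mul hbig hv (by linarith) (abs_nonneg s)
      linarith
    · have huS : u ∈ S := ⟨⟨u, huF⟩, by simp [hunorm], rfl⟩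
      obtain ⟨y₀, hy₀b, hy₀⟩ := Set.mem_iUnion₂.mp (hbcov huS)
      have hy₀dist : ‖u - y₀‖ < ε / 3 := by
        rw [← dist_eq_norm]; exact Metric.mem_ball.mp hy₀
      set f := g y₀ with hf
      have hf1 : ‖f‖ = 1 := hg1 y₀ hy₀b
      have hfy₀ : f y₀ = ‖y₀‖ := hg2 y₀ hy₀b
      have hy₀norm : ‖y₀‖ = 1 := hnorm1 y₀ (hbS hy₀b)
      have hfsmall : |f v| ≤ ε * L / 12 := hsmall f ⟨y₀, hy₀b, rfl⟩
      have hle : f (u + s • v) ≤ ‖u + s • v‖ := by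
        calc f (u + s • v) ≤ |f (u + s • v)| := le_abs_self _
        _ ≤ ‖f‖ * ‖u + s • v‖ := f.le_opNorm _
        _ = ‖u + s • v‖ := by rw [hf1, one_mul]
      have hexp : f (u + s • v) = f y₀ + f (u - y₀) + s * f v := by
        have hre : u + s • v = y₀ + (u - y₀) + s • v := by abel
        rw [hre, map_add, map_add, map_smul, smul_eq_mul]
      have h3 : |f (u - y₀)| ≤ ‖u - y₀‖ := by
        calc |f (u - y₀)| ≤ ‖f‖ * ‖u - y₀‖ := f.le_opNorm _
        _ = ‖u - y₀‖ := by rw [hf1, one_mul]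
      have h4 : |s * f v| ≤ (4 / L) * (ε * L / 12) := by
        rw [abs_mul]
        apply mul_le_mul (le_of_lt hsml) hfsmall (abs_nonneg _) (by positivity)
      have h5 : (4 / L) * (ε * L / 12) = ε / 3 := by field_simp; ring
      have := abs_le.mp h3
      have := abs_le.mp h4
      rw [hexp, hfy₀, hy₀norm] at hle
      linarith
  calc (1 - ε) * ‖y‖ ≤ ‖u + s • v‖ * ‖y‖ := by
        apply mul_le_mul_of_nonneg_right key (le_of_lt hynorm)
  _ = ‖y + t • v‖ := by rw [hdecomp, norm_smul, norm_norm, mul_comm]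


/-- Let `(x_α)` be a bounded net in a Banach space converging to `0`
weakly but not in norm.  Then there is an increasing sequence `(α_n)` of indices such
that `lim_n ‖x_{α_n}‖ = limsup_α ‖x_α‖`, the asymptotic diameter of `(x_{α_n})` is at
most `D[(x_α)] = limsup_α limsup_β ‖x_α − x_β‖`, and `(x_{α_n})` is a basic sequence. -/
theorem stmt4 {X : Type*} [NormedAddCommGroup X] [NormedSpace ℝ X] [CompleteSpace X]
    {ι : Type*} [Nonempty ι] [SemilatticeSup ι]
    (x : ι → X)
    (hbd : BddAbove (Set.range fun α => ‖x α‖))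
    (hweak : ∀ f : X →L[ℝ] ℝ, Tendsto (fun α => f (x α)) atTop (nhds 0))
    (hnotnorm : ¬ Tendsto (fun α => ‖x α‖) atTop (nhds 0)) :
    ∃ α : ℕ → ι, StrictMono α ∧
      Tendsto (fun n => ‖x (α n)‖) atTop (nhds (limsup (fun β => ‖x β‖) atTop)) ∧
      asympDiam (fun n => x (α n)) ≤
        limsup (fun β => limsup (fun γ => ‖x β - x γ‖) atTop) atTop ∧
      IsBasicSeq (fun n => x (α n)) := by
  classical
  -- Degenerate case: ι has a greatest element.
  by_cases htop : ∃ m : ι, ∀ b : ι, b ≤ m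
  · exfalso
    obtain ⟨m, hm⟩ := htop
    have hmem : {a : ι | a = m} ∈ (atTop : Filter ι) := by
      filter_upwards [eventually_ge_atTop m] with a ha
      exact le_antisymm (hm a) ha
    have hxm : x m = 0 := by
      by_contra h0
      obtain ⟨g, hg1, hg2⟩ := exists_dual_vector ℝ (x m) (norm_ne_zero_iff.mpr h0)
      have h1 : Tendsto (fun a => g (x a)) atTop (nhds (g (x m))) := by
        refine tendsto_const_nhds.congr' ?_
        filter_upwards [hmem] with a ha; rw [ha]
      have h2 := tendsto_nhds_unique h1 (hweak g)
      rw [hg2] at h2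
      exact h0 (norm_eq_zero.mp (by exact_mod_cast h2))
    apply hnotnorm
    refine (tendsto_const_nhds : Tendsto (fun _ : ι => (0:ℝ)) atTop _).congr' ?_
    filter_upwards [hmem] with a ha
    rw [ha, hxm, norm_zero]
  push_neg at htop
  -- Basic boundedness facts.
  obtain ⟨M, hM⟩ := hbd
  have hMx : ∀ a : ι, ‖x a‖ ≤ M := fun a => hM (Set.mem_range_self a)
  have hbdd : IsBoundedUnder (· ≤ ·) (atTop : Filter ι) (fun a => ‖x a‖) :=
    isBoundedUnder_of ⟨M, hMx⟩
  have hcobdd : IsCoboundedUnder (· ≤ ·) (atTop : Filter ι) (fun a => ‖x a‖) :=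
    IsBoundedUnder.isCoboundedUnder_le (isBoundedUnder_of ⟨0, fun a => norm_nonneg _⟩)
  set L := limsup (fun β => ‖x β‖) (atTop : Filter ι) with hLdef
  have hL0 : 0 < L := by
    rcases lt_or_ge 0 L with h | h
    · exact h
    · exfalso
      apply hnotnorm
      have hls : limsup (fun β => ‖x β‖) (atTop : Filter ι) = 0 := by
        apply le_antisymm (hLdef ▸ h)
        exact le_limsup_of_frequently_le
          (Filter.Frequently.of_forall fun a => norm_nonneg _) hbdd
      have hli : liminf (fun β => ‖x β‖) (atTop : Filter ι) = 0 := by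
        apply le_antisymm
        · rw [← hls]; exact liminf_le_limsup hbdd
            (isBoundedUnder_of ⟨0, fun a => norm_nonneg _⟩)
        · exact le_liminf_of_le
            (IsBoundedUnder.isCoboundedUnder_ge hbdd)
            (Filter.Eventually.of_forall fun a => norm_nonneg _)
      exact tendsto_of_liminf_eq_limsup hli hls hbdd
        (isBoundedUnder_of ⟨0, fun a => norm_nonneg _⟩)
  set g : ι → ℝ := fun β => limsup (fun γ => ‖x β - x γ‖) (atTop : Filter ι) with hgdef
  have hgbd : ∀ β, g β ≤ 2 * M := by
    intro β
    apply limsup_le_of_le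
      (IsBoundedUnder.isCoboundedUnder_le
        (isBoundedUnder_of ⟨0, fun a => norm_nonneg _⟩))
    apply Filter.Eventually.of_forall
    intro γ
    calc ‖x β - x γ‖ ≤ ‖x β‖ + ‖x γ‖ := norm_sub_le _ _
    _ ≤ 2 * M := by linarith [hMx β, hMx γ]
  have hgpairbdd : ∀ β, IsBoundedUnder (· ≤ ·) (atTop : Filter ι) (fun γ => ‖x β - x γ‖) := by
    intro β
    refine isBoundedUnder_of ⟨2 * M, fun γ => ?_⟩
    calc ‖x β - x γ‖ ≤ ‖x β‖ + ‖x γ‖ := norm_sub_le _ _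
    _ ≤ 2 * M := by linarith [hMx β, hMx γ]
  set D := limsup g (atTop : Filter ι) with hDdef
  have hDbdd : IsBoundedUnder (· ≤ ·) (atTop : Filter ι) g :=
    isBoundedUnder_of ⟨2 * M, hgbd⟩
  have hg0 : ∀ β, 0 ≤ g β := fun β =>
    le_limsup_of_frequently_le (Filter.Frequently.of_forall fun γ => norm_nonneg _) (hgpairbdd β)
  have hD0 : 0 ≤ D :=
    le_limsup_of_frequently_le (Filter.Frequently.of_forall hg0) hDbdd
  -- the schedule of tolerances
  set ε : ℕ → ℝ := fun n => min (L / 2) ((1/2 : ℝ) ^ (n + 2)) with hεdef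
  have hε0 : ∀ n, 0 < ε n := fun n => lt_min (by linarith) (by positivity)
  have hεLhalf : ∀ n, ε n ≤ L / 2 := fun n => min_le_left _ _
  have hεpow : ∀ n, ε n ≤ (1/2 : ℝ) ^ (n + 2) := fun n => min_le_right _ _
  have hεanti : Antitone ε := by
    apply Antitone.min (antitone_const)
    intro a b hab
    exact pow_le_pow_of_le_one (by norm_num) (by norm_num) (by omega)
  have hεtend : Tendsto ε atTop (nhds 0) := by
    have h1 : Tendsto (fun n : ℕ => (1/2 : ℝ) ^ (n + 2)) atTop (nhds 0) := by
      have := tendsto_pow_atTop_nhds_zero_of_lt_one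
        (by norm_num : (0:ℝ) ≤ 1/2) (by norm_num : (1/2:ℝ) < 1)
      exact this.comp (tendsto_add_atTop_nat 2)
    have h2 : Tendsto (fun _ : ℕ => L / 2) atTop (nhds (L / 2)) := tendsto_const_nhds
    have := h2.min h1
    rwa [min_eq_right (by linarith : (0:ℝ) ≤ L / 2)] at this
  -- the inductive property
  set P : ℕ → (ℕ → ι) → ι → Prop := fun n f a =>
    (∀ m < n, f m < a) ∧
    (L - ε n ≤ ‖x a‖ ∧ ‖x a‖ ≤ L + ε n) ∧
    (limsup (fun γ => ‖x a - x γ‖) (atTop : Filter ι) < D + ε n) ∧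
    (∀ m < n, ‖x (f m) - x a‖ ≤ D + ε m) ∧
    (∀ y ∈ Submodule.span ℝ ((fun m => x (f m)) '' Set.Iio n), ∀ t : ℝ,
      (1 - ε n) * ‖y‖ ≤ ‖y + t • x a‖) with hPdef
  have hmono : ∀ n f f' a, (∀ m < n, f m = f' m) → P n f a → P n f' a := by
    intro n f f' a hag ⟨h1, h2, h3, h4, h5⟩
    have himg : (fun m => x (f' m)) '' Set.Iio n = (fun m => x (f m)) '' Set.Iio n := by
      apply Set.image_congr
      intro m hm; rw [hag m hm]
    refine ⟨fun m hm => hag m hm ▸ h1 m hm, h2, h3, fun m hm => hag m hm ▸ h4 m hm, ?_⟩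
    rw [himg]; exact h5
  have hstep : ∀ n f, (∀ m < n, P m f (f m)) → ∃ a, P n f a := by
    intro n f hprev
    set F := Submodule.span ℝ ((fun m => x (f m)) '' Set.Iio n) with hF
    have hfin : FiniteDimensional ℝ F :=
      FiniteDimensional.span_of_finite ℝ ((Set.finite_Iio n).image _)
    obtain ⟨T, η, hTfin, hη, hkey⟩ := mazur_key F hfin (hε0 n) hL0
    -- eventual conditions
    have E1 : ∀ᶠ a in (atTop : Filter ι), ∀ f' ∈ T, |f' (x a)| ≤ η := by
      rw [hTfin.eventually_all]
      intro f' _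
      have := (hweak f').eventually (eventually_abs_sub_lt 0 hη)
      filter_upwards [this] with a ha
      rw [sub_zero] at ha
      exact le_of_lt ha
    have E2 : ∀ᶠ a in (atTop : Filter ι), ‖x a‖ < L + ε n :=
      eventually_lt_of_limsup_lt (by rw [← hLdef]; exact lt_add_of_pos_right _ (hε0 n)) hbdd
    have E3 : ∀ᶠ a in (atTop : Filter ι), g a < D + ε n :=
      eventually_lt_of_limsup_lt (by rw [← hDdef]; exact lt_add_of_pos_right _ (hε0 n)) hDbdd
    have E4 : ∀ᶠ a in (atTop : Filter ι), ∀ m ∈ Set.Iio n, ‖x (f m) - x a‖ ≤ D + ε m := by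
      rw [(Set.finite_Iio n).eventually_all]
      intro m hm
      have h3 := (hprev m hm).2.2.1
      have := eventually_lt_of_limsup_lt h3 (hgpairbdd (f m))
      filter_upwards [this] with a ha using le_of_lt ha
    obtain ⟨Mι, hMι⟩ := Finset.exists_le ((Finset.range n).image f)
    obtain ⟨c, hc⟩ := htop Mι
    have hβ₀ : ∀ m < n, f m < Mι ⊔ c := by
      intro m hm
      have h1 : f m ≤ Mι := hMι _ (Finset.mem_image_of_mem f (Finset.mem_range.mpr hm))
      have h2 : Mι < Mι ⊔ c := by
        apply lt_of_le_of_ne le_sup_left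
        intro heq
        exact hc (le_trans le_sup_right (le_of_eq heq.symm))
      exact lt_of_le_of_lt h1 h2
    have E5 : ∀ᶠ a in (atTop : Filter ι), Mι ⊔ c ≤ a := eventually_ge_atTop _
    -- frequent condition
    have hfreq : ∃ᶠ a in (atTop : Filter ι), L - ε n < ‖x a‖ :=
      frequently_lt_of_lt_limsup hcobdd (by rw [← hLdef]; exact sub_lt_self _ (hε0 n))
    obtain ⟨a, hfa, hE1, hE2, hE3, hE4, hE5⟩ :=
      (hfreq.and_eventually (E1.and (E2.and (E3.and (E4.and E5))))).exists
    refine ⟨a, fun m hm => lt_of_lt_of_le (hβ₀ m hm) hE5, ⟨le_of_lt hfa, le_of_lt hE2⟩,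
      hE3, fun m hm => hE4 m hm, ?_⟩
    intro y hy t
    have hva : L / 2 ≤ ‖x a‖ := by
      have h6 := hεLhalf n
      have h7 : L - ε n ≤ ‖x a‖ := le_of_lt hfa
      linarith only [h6, h7]
    exact hkey (x a) hva hE1 y hy t
  obtain ⟨α, hα⟩ := exists_seq_of_step P hmono hstep
  have hsm : StrictMono α := strictMono_nat_of_lt_succ fun n => (hα (n+1)).1 n (Nat.lt_succ_self n)
  refine ⟨α, hsm, ?_, ?_, ?_⟩
  · -- convergence of norms
    have hlow : ∀ n, L - ε n ≤ ‖x (α n)‖ := fun n => (hα n).2.1.1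
    have hhigh : ∀ n, ‖x (α n)‖ ≤ L + ε n := fun n => (hα n).2.1.2
    have h1 : Tendsto (fun n => L - ε n) atTop (nhds L) := by
      have h := Tendsto.sub (tendsto_const_nhds : Tendsto (fun _ : ℕ => L) atTop (nhds L)) hεtend
      simpa using h
    have h2 : Tendsto (fun n => L + ε n) atTop (nhds L) := by
      have h := Tendsto.add (tendsto_const_nhds : Tendsto (fun _ : ℕ => L) atTop (nhds L)) hεtend
      simpa using h
    exact tendsto_of_tendsto_of_tendsto_of_le_of_le h1 h2 hlow hhigh
  · -- asymptotic diameter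
    have hpair : ∀ k m, k < m → ‖x (α k) - x (α m)‖ ≤ D + ε k := by
      intro k m hk
      exact (hα m).2.2.2.1 k hk
    have hsup : ∀ n, sSup {d : ℝ | ∃ m ≥ n, ∃ k ≥ n, d = ‖x (α m) - x (α k)‖} ≤ D + ε n := by
      intro n
      apply Real.sSup_le
      · rintro d ⟨m, hm, k, hk, rfl⟩
        rcases lt_trichotomy m k with h | rfl | h
        · calc ‖x (α m) - x (α k)‖ ≤ D + ε m := hpair m k h
          _ ≤ D + ε n := by linarith [hεanti hm]
        · simp only [sub_self, norm_zero]
          linarith [hε0 n]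
        · calc ‖x (α m) - x (α k)‖ = ‖x (α k) - x (α m)‖ := norm_sub_rev _ _
          _ ≤ D + ε k := hpair k m h
          _ ≤ D + ε n := by linarith [hεanti hk]
      · linarith [hε0 n]
    have hbddbelow : BddBelow (Set.range fun n =>
        sSup {d : ℝ | ∃ m ≥ n, ∃ k ≥ n, d = ‖x (α m) - x (α k)‖}) := by
      refine ⟨0, ?_⟩
      rintro r ⟨n, rfl⟩
      apply Real.sSup_nonneg
      rintro d ⟨m, _, k, _, rfl⟩
      exact norm_nonneg _
    rw [asympDiam]
    apply le_of_forall_pos_le_add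
    intro δ hδ
    obtain ⟨m, hmδ⟩ := exists_pow_lt_of_lt_one hδ (by norm_num : (1/2:ℝ) < 1)
    have hεm : ε m < δ := by
      calc ε m ≤ (1/2:ℝ) ^ (m + 2) := hεpow m
      _ ≤ (1/2:ℝ) ^ m := pow_le_pow_of_le_one (by norm_num) (by norm_num) (by omega)
      _ < δ := hmδ
    calc (⨅ n : ℕ, sSup {d : ℝ | ∃ m' ≥ n, ∃ k ≥ n, d = ‖x (α m') - x (α k)‖})
        ≤ sSup {d : ℝ | ∃ m' ≥ m, ∃ k ≥ m, d = ‖x (α m') - x (α k)‖} := ciInf_le hbddbelow m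
    _ ≤ D + ε m := hsup m
    _ ≤ D + δ := by linarith
  · -- basic sequence
    refine ⟨2, by norm_num, ?_⟩
    intro p q hqp t
    set S : ℕ → X := fun j => ∑ i ∈ Finset.range j, t i • x (α i) with hSdef
    have hSmem : ∀ j, S j ∈ Submodule.span ℝ ((fun m => x (α m)) '' Set.Iio j) := by
      intro j
      apply Submodule.sum_smul_mem
      intro i hi
      exact Submodule.subset_span ⟨i, Finset.mem_range.mp hi, rfl⟩
    have hεsum : ∀ p', ∑ j ∈ Finset.Ico q p', ε j ≤ 1/2 := by
      intro p'
      calc ∑ j ∈ Finset.Ico q p', ε j ≤ ∑ j ∈ Finset.Ico q p', (1/2:ℝ) ^ (j + 2) :=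
            Finset.sum_le_sum fun j _ => hεpow j
      _ ≤ ∑ j ∈ Finset.range p', (1/2:ℝ) ^ (j + 2) := by
            apply Finset.sum_le_sum_of_subset_of_nonneg
            · intro j hj
              rw [Finset.mem_range]
              exact (Finset.mem_Ico.mp hj).2
            · intro j _ _; positivity
      _ = ∑ j ∈ Finset.range p', (1/2:ℝ) ^ j * (1/4 : ℝ) := by
            apply Finset.sum_congr rfl
            intro j _; rw [pow_add]; norm_num
      _ = (∑ j ∈ Finset.range p', (1/2:ℝ) ^ j) * (1/4:ℝ) := by rw [Finset.sum_mul]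
      _ ≤ 2 * (1/4:ℝ) := by
            apply mul_le_mul_of_nonneg_right (sum_geometric_two_le p') (by norm_num)
      _ = 1/2 := by norm_num
    have hind : ∀ p', q ≤ p' → (1 - ∑ j ∈ Finset.Ico q p', ε j) * ‖S q‖ ≤ ‖S p'‖ := by
      intro p' hp'
      induction p' , hp' using Nat.le_induction with
      | base => simp
      | succ p' hp' ih =>
          have hstep' : (1 - ε p') * ‖S p'‖ ≤ ‖S (p' + 1)‖ := by
            have h5 := (hα p').2.2.2.2 (S p') (hSmem p') (t p')
            have : S (p' + 1) = S p' + t p' • x (α p') := by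
              rw [hSdef]; simp [Finset.sum_range_succ]
            rw [this]
            exact h5
          have hε1 : ε p' ≤ 1/2 := by
            calc ε p' ≤ (1/2:ℝ) ^ (p' + 2) := hεpow p'
            _ ≤ 1/2 := by
                apply pow_le_of_le_one (by norm_num) (by norm_num) (by omega)
          have hA := hεsum p'
          have hA0 : 0 ≤ ∑ j ∈ Finset.Ico q p', ε j :=
            Finset.sum_nonneg fun j _ => le_of_lt (hε0 j)
          rw [Finset.sum_Ico_succ_top hp']
          have hnn : (0:ℝ) ≤ ‖S q‖ := norm_nonneg _
          have hεp0 : 0 < ε p' := hε0 p'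
          calc (1 - (∑ j ∈ Finset.Ico q p', ε j + ε p')) * ‖S q‖
              ≤ (1 - ε p') * ((1 - ∑ j ∈ Finset.Ico q p', ε j) * ‖S q‖) := by
                rw [← mul_assoc]
                apply mul_le_mul_of_nonneg_right _ hnn
                nlinarith
          _ ≤ (1 - ε p') * ‖S p'‖ := by
                apply mul_le_mul_of_nonneg_left ih (by linarith)
          _ ≤ ‖S (p' + 1)‖ := hstep'
    have h1 := hind p hqp
    have h2 := hεsum p
    have hnn : (0:ℝ) ≤ ‖S q‖ := norm_nonneg _
    have : (1/2 : ℝ) * ‖S q‖ ≤ ‖S p‖ := by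
      calc (1/2:ℝ) * ‖S q‖ ≤ (1 - ∑ j ∈ Finset.Ico q p, ε j) * ‖S q‖ := by
            apply mul_le_mul_of_nonneg_right _ hnn
            linarith
      _ ≤ ‖S p‖ := h1
    linarith
end

section
/- For any Banach space X, the normal structure coefficient N(X) equals sup{k : k·r_a(x_α) ≤ diam_a(x_α) for every bounded net (x_α) in X}, where r_a(x_α) = inf{limsup_α ‖x_α − y‖ : y ∈ closed convex hull of {x_α : α ∈ A}} and diam_a is the asymptotic diameter of the net. -/
open Filter Topology

universe u

variable {X : Type*} [NormedAddCommGroup X] [NormedSpace ℝ X]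

/-- The Chebyshev radius of a set relative to itself:
`r(K) = inf_{y ∈ K} sup_{x ∈ K} ‖x − y‖`. -/
noncomputable def chebRadius (K : Set X) : ℝ :=
  sInf {r : ℝ | ∃ y ∈ K, r = sSup {d : ℝ | ∃ x ∈ K, d = ‖x - y‖}}

/-- The normal structure coefficient
`N(X) = sup{k : k·r(K) ≤ diam K for each bounded convex K ⊆ X}`. -/
noncomputable def normalStructureCoeff (X : Type*) [NormedAddCommGroup X]
    [NormedSpace ℝ X] : ℝ :=
  sSup {k : ℝ | ∀ K : Set X, K.Nonempty → Convex ℝ K → Bornology.IsBounded K →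
    k * chebRadius K ≤ Metric.diam K}

/-- The asymptotic diameter of a net: `inf_α sup_{β,γ ≥ α} ‖x_β − x_γ‖`. -/
noncomputable def asympDiamNet {ι : Type*} [Preorder ι] (x : ι → X) : ℝ :=
  sInf {s : ℝ | ∃ α : ι, s = sSup {d : ℝ | ∃ β ≥ α, ∃ γ ≥ α, d = ‖x β - x γ‖}}

/-- The asymptotic radius `r_a` of a net relative to the closed convex hull of its
range. -/
noncomputable def asympRadNet {ι : Type*} [Preorder ι] (x : ι → X) : ℝ :=
  sInf {r : ℝ | ∃ y ∈ closure (convexHull ℝ (Set.range x)),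
    r = limsup (fun α => ‖x α - y‖) atTop}

theorem aux_S1_S2 {X : Type u} [NormedAddCommGroup X] [NormedSpace ℝ X] {k : ℝ}
    (hk : ∀ K : Set X, K.Nonempty → Convex ℝ K → Bornology.IsBounded K →
      k * chebRadius K ≤ Metric.diam K)
    (ι : Type u) [SemilatticeSup ι] [Nonempty ι] (x : ι → X)
    (hb : BddAbove (Set.range fun α => ‖x α‖)) :
    k * asympRadNet x ≤ asympDiamNet x := by
  obtain ⟨M, hM⟩ := hb
  have hM' : ∀ α, ‖x α‖ ≤ M := fun α => hM ⟨α, rfl⟩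
  -- boundedness of the distance functions
  have hfb : ∀ y : X, IsBoundedUnder (· ≤ ·) (atTop : Filter ι) (fun α => ‖x α - y‖) := by
    intro y
    exact isBoundedUnder_of ⟨M + ‖y‖, fun α =>
      le_trans (norm_sub_le _ _) (by linarith [hM' α])⟩
  have hfcb : ∀ y : X, IsCoboundedUnder (· ≤ ·) (atTop : Filter ι) (fun α => ‖x α - y‖) :=
    fun y => isCoboundedUnder_le_of_le atTop (fun α => norm_nonneg _)
  have hlimsup_nonneg : ∀ y : X, 0 ≤ limsup (fun α => ‖x α - y‖) atTop := fun y =>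
    le_limsup_of_frequently_le (Frequently.of_forall fun α => norm_nonneg _) (hfb y)
  -- the asymptotic radius set
  have hrad_nonneg : 0 ≤ asympRadNet x := by
    unfold asympRadNet
    apply Real.sInf_nonneg
    rintro r ⟨y, hy, rfl⟩
    exact hlimsup_nonneg y
  -- the asymptotic diameter set elements are nonneg
  have hdset_bdd : ∀ α : ι, BddAbove {d : ℝ | ∃ β ≥ α, ∃ γ ≥ α, d = ‖x β - x γ‖} := by
    intro α
    refine ⟨M + M, ?_⟩
    rintro d ⟨β, _, γ, _, rfl⟩
    exact le_trans (norm_sub_le _ _) (by linarith [hM' β, hM' γ])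
  have hdset_nonneg : ∀ α : ι, 0 ≤ sSup {d : ℝ | ∃ β ≥ α, ∃ γ ≥ α, d = ‖x β - x γ‖} := by
    intro α
    have h0 : (0 : ℝ) ∈ {d : ℝ | ∃ β ≥ α, ∃ γ ≥ α, d = ‖x β - x γ‖} :=
      ⟨α, le_rfl, α, le_rfl, by simp⟩
    exact le_csSup (hdset_bdd α) h0
  rcases le_or_gt k 0 with hk0 | hk0
  · have hd : 0 ≤ asympDiamNet x := by
      apply Real.sInf_nonneg
      rintro s ⟨α, rfl⟩
      exact hdset_nonneg α
    calc k * asympRadNet x ≤ 0 := mul_nonpos_of_nonpos_of_nonneg hk0 hrad_nonneg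
    _ ≤ asympDiamNet x := hd
  · -- k > 0
    unfold asympDiamNet
    refine le_csInf ⟨_, ⟨Classical.arbitrary ι, rfl⟩⟩ ?_
    rintro s ⟨α, rfl⟩
    set T : Set X := x '' Set.Ici α with hT
    set C : Set X := closure (convexHull ℝ T) with hC
    have hTsub : T ⊆ C := fun z hz => subset_closure (subset_convexHull ℝ T hz)
    have hTne : T.Nonempty := ⟨x α, α, le_rfl, rfl⟩
    have hTbdd : Bornology.IsBounded T := by
      rw [isBounded_iff_forall_norm_le]
      exact ⟨M, by rintro z ⟨β, _, rfl⟩; exact hM' β⟩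
    have hCne : C.Nonempty := hTne.mono hTsub
    have hCconv : Convex ℝ C := (convex_convexHull ℝ T).closure
    have hCbdd : Bornology.IsBounded C := (isBounded_convexHull.2 hTbdd).closure
    obtain ⟨Mc, hMc⟩ := isBounded_iff_forall_norm_le.1 hCbdd
    set d : ℝ := sSup {d : ℝ | ∃ β ≥ α, ∃ γ ≥ α, d = ‖x β - x γ‖} with hd
    have hdiamC : Metric.diam C ≤ d := by
      rw [hC, Metric.diam_closure, convexHull_diam]
      apply Metric.diam_le_of_forall_dist_le (hdset_nonneg α)
      rintro z ⟨β, hβ, rfl⟩ w ⟨γ, hγ, rfl⟩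
      rw [dist_eq_norm]
      exact le_csSup (hdset_bdd α) ⟨β, hβ, γ, hγ, rfl⟩
    have hCsub : C ⊆ closure (convexHull ℝ (Set.range x)) :=
      closure_mono (convexHull_mono (by rintro z ⟨β, _, rfl⟩; exact ⟨β, rfl⟩))
    -- asympRadNet x ≤ chebRadius C
    have hradC : asympRadNet x ≤ chebRadius C := by
      unfold chebRadius
      apply le_csInf
      · obtain ⟨y, hy⟩ := hCne
        exact ⟨_, y, hy, rfl⟩
      rintro r ⟨y, hy, rfl⟩
      have h1 : asympRadNet x ≤ limsup (fun β => ‖x β - y‖) atTop := by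
        unfold asympRadNet
        apply csInf_le
        · exact ⟨0, by rintro r ⟨z, hz, rfl⟩; exact hlimsup_nonneg z⟩
        · exact ⟨y, hCsub hy, rfl⟩
      refine h1.trans (limsup_le_of_le (hfcb y) ?_)
      rw [eventually_atTop]
      refine ⟨α, fun β hβ => ?_⟩
      apply le_csSup
      · refine ⟨Mc + ‖y‖, ?_⟩
        rintro e ⟨z, hz, rfl⟩
        exact le_trans (norm_sub_le _ _) (by linarith [hMc z hz])
      · exact ⟨x β, hTsub ⟨β, hβ, rfl⟩, rfl⟩
    calc k * asympRadNet x ≤ k * chebRadius C :=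
          mul_le_mul_of_nonneg_left hradC hk0.le
    _ ≤ Metric.diam C := hk C hCne hCconv hCbdd
    _ ≤ d := hdiamC

theorem aux_S2_S1 {X : Type u} [NormedAddCommGroup X] [NormedSpace ℝ X] {k : ℝ}
    (hk : ∀ (ι : Type u) [SemilatticeSup ι] [Nonempty ι] (x : ι → X),
      BddAbove (Set.range fun α => ‖x α‖) → k * asympRadNet x ≤ asympDiamNet x)
    (K : Set X) (hne : K.Nonempty) (hconv : Convex ℝ K)
    (hbdd : Bornology.IsBounded K) :
    k * chebRadius K ≤ Metric.diam K := by
  classical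
  obtain ⟨M, hM⟩ := isBounded_iff_forall_norm_le.1 hbdd
  have hchebset_bdd : ∀ y : X, y ∈ K →
      BddAbove {d : ℝ | ∃ p ∈ K, d = ‖p - y‖} := by
    intro y hy
    refine ⟨M + M, ?_⟩
    rintro d ⟨p, hp, rfl⟩
    exact le_trans (norm_sub_le _ _) (by linarith [hM p hp, hM y hy])
  have hcheb_nonneg : 0 ≤ chebRadius K := by
    unfold chebRadius
    apply Real.sInf_nonneg
    rintro r ⟨y, hy, rfl⟩
    exact le_csSup (hchebset_bdd y hy) ⟨y, hy, by simp⟩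
  rcases le_or_gt k 0 with hk0 | hk0
  · calc k * chebRadius K ≤ 0 := mul_nonpos_of_nonpos_of_nonneg hk0 hcheb_nonneg
    _ ≤ Metric.diam K := Metric.diam_nonneg
  -- k > 0 : build the multiset-indexed net
  haveI : Nonempty ↥K := hne.to_subtype
  set pick : Multiset ↥K → ↥K := fun m =>
    if h : ∃ p : ↥K, ∀ q : ↥K, q ≠ p → m.count q < m.count p then h.choose
    else Classical.arbitrary ↥K with hpick
  set y : Multiset ↥K → X := fun m => ((pick m : ↥K) : X) with hy
  have hyK : ∀ m, y m ∈ K := fun m => (pick m).2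
  -- cofinal hitting property
  have hP : ∀ (p : ↥K) (m : Multiset ↥K), ∃ t, m ≤ t ∧ y t = (p : X) := by
    intro p m
    refine ⟨m + Multiset.replicate (Multiset.card m + 1) p, Multiset.le_add_right _ _, ?_⟩
    set t := m + Multiset.replicate (Multiset.card m + 1) p with ht
    have hdom : ∀ q : ↥K, q ≠ p → t.count q < t.count p := by
      intro q hq
      have h1 : t.count q = m.count q := by
        rw [ht, Multiset.count_add, Multiset.count_replicate, if_neg (Ne.symm hq), add_zero]
      have h2 : t.count p = m.count p + (Multiset.card m + 1) := by
        rw [ht, Multiset.count_add, Multiset.count_replicate, if_pos rfl]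
      have h3 : m.count q ≤ Multiset.card m := Multiset.count_le_card _ _
      omega
    have hex : ∃ p' : ↥K, ∀ q : ↥K, q ≠ p' → t.count q < t.count p' := ⟨p, hdom⟩
    have : pick t = hex.choose := by rw [hpick]; exact dif_pos hex
    have hcp : hex.choose = p := by
      by_contra hne'
      exact lt_asymm (hdom _ hne') (hex.choose_spec p (Ne.symm hne'))
    rw [hy]; simp only [this, hcp]
  have hb : BddAbove (Set.range fun m => ‖y m‖) := by
    refine ⟨M, ?_⟩
    rintro r ⟨m, rfl⟩
    exact hM _ (hyK m)
  have hnet := hk (Multiset ↥K) y hb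
  -- boundedness facts for the net
  have hfb : ∀ z : X, IsBoundedUnder (· ≤ ·) (atTop : Filter (Multiset ↥K))
      (fun m => ‖y m - z‖) := by
    intro z
    exact isBoundedUnder_of ⟨M + ‖z‖, fun m =>
      le_trans (norm_sub_le _ _) (by linarith [hM _ (hyK m)])⟩
  have hlimsup_nonneg : ∀ z : X,
      0 ≤ limsup (fun m => ‖y m - z‖) (atTop : Filter (Multiset ↥K)) := fun z =>
    le_limsup_of_frequently_le (Frequently.of_forall fun m => norm_nonneg _) (hfb z)
  -- asymptotic diameter bounded by diam K
  have hdiam : asympDiamNet y ≤ Metric.diam K := by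
    unfold asympDiamNet
    have h1 : sSup {d : ℝ | ∃ β ≥ (0 : Multiset ↥K), ∃ γ ≥ (0 : Multiset ↥K),
        d = ‖y β - y γ‖} ≤ Metric.diam K := by
      apply Real.sSup_le
      · rintro d ⟨β, _, γ, _, rfl⟩
        rw [← dist_eq_norm]
        exact Metric.dist_le_diam_of_mem hbdd (hyK β) (hyK γ)
      · exact Metric.diam_nonneg
    refine le_trans (csInf_le ?_ ⟨(0 : Multiset ↥K), rfl⟩) h1
    refine ⟨0, ?_⟩
    rintro s ⟨α, rfl⟩
    refine le_csSup ⟨M + M, ?_⟩ ⟨α, le_rfl, α, le_rfl, by simp⟩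
    rintro d ⟨β, _, γ, _, rfl⟩
    exact le_trans (norm_sub_le _ _) (by linarith [hM _ (hyK β), hM _ (hyK γ)])
  -- chebRadius K ≤ asympRadNet y
  have hrad : chebRadius K ≤ asympRadNet y := by
    unfold asympRadNet
    apply le_csInf
    · exact ⟨_, y 0, subset_closure (subset_convexHull ℝ _ ⟨0, rfl⟩), rfl⟩
    rintro r ⟨z, hz, rfl⟩
    have hzK : z ∈ closure K := by
      have h1 : closure (convexHull ℝ (Set.range y)) ⊆ closure K :=
        closure_mono (convexHull_min (by rintro w ⟨m, rfl⟩; exact hyK m) hconv)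
      exact h1 hz
    apply le_of_forall_pos_le_add
    intro ε hε
    obtain ⟨z₁, hz₁K, hz₁⟩ := Metric.mem_closure_iff.1 hzK ε hε
    have hle1 : chebRadius K ≤ sSup {d : ℝ | ∃ p ∈ K, d = ‖p - z₁‖} := by
      unfold chebRadius
      refine csInf_le ⟨0, ?_⟩ ⟨z₁, hz₁K, rfl⟩
      rintro r ⟨w, hw, rfl⟩
      exact le_csSup (hchebset_bdd w hw) ⟨w, hw, by simp⟩
    refine hle1.trans ?_
    apply Real.sSup_le
    · rintro d ⟨p, hp, rfl⟩
      have h2 : ‖p - z‖ ≤ limsup (fun m => ‖y m - z‖) (atTop : Filter (Multiset ↥K)) := by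
        apply le_limsup_of_frequently_le _ (hfb z)
        rw [frequently_atTop]
        intro m
        obtain ⟨t, hmt, hyt⟩ := hP ⟨p, hp⟩ m
        exact ⟨t, hmt, by rw [hyt]⟩
      have h3 : ‖p - z₁‖ ≤ ‖p - z‖ + ‖z - z₁‖ := by
        calc ‖p - z₁‖ = ‖(p - z) + (z - z₁)‖ := by abel_nf
        _ ≤ ‖p - z‖ + ‖z - z₁‖ := norm_add_le _ _
      have h4 : ‖z - z₁‖ ≤ ε := by
        rw [← dist_eq_norm]; exact hz₁.le
      linarith
    · linarith [hlimsup_nonneg z]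
  calc k * chebRadius K ≤ k * asympRadNet y :=
        mul_le_mul_of_nonneg_left hrad hk0.le
  _ ≤ asympDiamNet y := hnet
  _ ≤ Metric.diam K := hdiam

/-- For any Banach space `X`, the normal structure coefficient
equals `sup{k : k·r_a(x_α) ≤ diam_a(x_α) for every bounded net (x_α) in X}`. -/
theorem stmt7 (X : Type u) [NormedAddCommGroup X] [NormedSpace ℝ X] [CompleteSpace X] :
    normalStructureCoeff X =
      sSup {k : ℝ | ∀ (ι : Type u) [SemilatticeSup ι] [Nonempty ι] (x : ι → X),
        BddAbove (Set.range fun α => ‖x α‖) →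
        k * asympRadNet x ≤ asympDiamNet x} := by
  have hset : {k : ℝ | ∀ K : Set X, K.Nonempty → Convex ℝ K → Bornology.IsBounded K →
      k * chebRadius K ≤ Metric.diam K} =
      {k : ℝ | ∀ (ι : Type u) [SemilatticeSup ι] [Nonempty ι] (x : ι → X),
        BddAbove (Set.range fun α => ‖x α‖) →
        k * asympRadNet x ≤ asympDiamNet x} := by
    ext k
    constructor
    · intro hk ι _ _ x hb
      exact aux_S1_S2 hk ι x hb
    · intro hk K h1 h2 h3
      exact aux_S2_S1 hk K h1 h2 h3
  unfold normalStructureCoeff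
  rw [hset]
end
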